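/- Work of formation criterion: let β > 0, let E : Fin n → ℝ have partition function Z and Gibbs distribution τ, let p be a probability distribution on Fin n, and let W ∈ ℝ. Consider the combined system Fin n × Fin 2 (system plus work qubit) with energies (i, w) ↦ E_i + W·w (w ∈ {0,1}) and its associated Gibbs distribution τ_tot. Then there exists a stochastic matrix G on the combined system with G τ_tot = τ_tot and G(τ ⊗ δ_1) = p ⊗ δ_0 if and only if β·W ≥ D_max(p‖τ). (Thus the work of formation is W_form = kT·D_max(p‖τ) = F_max(p) − F_max(τ).) -/

import Mathlib

open Finset

/-- A probability distribution on a finite type. -/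
def IsProbDist {ι : Type*} [Fintype ι] (p : ι → ℝ) : Prop :=
  (∀ i, 0 ≤ p i) ∧ ∑ i, p i = 1

/-- A (column-)stochastic matrix: nonnegative entries, each column sums to 1.
It acts on probability vectors by `(G.mulVec p) j = ∑ i, G j i * p i`. -/
def IsStochastic {ι : Type*} [Fintype ι] (G : Matrix ι ι ℝ) : Prop :=
  (∀ i j, 0 ≤ G i j) ∧ ∀ j, ∑ i, G i j = 1

/-- The partition function `Z = ∑ i, exp (-β E i)`. -/
noncomputable def partZ {ι : Type*} [Fintype ι] (β : ℝ) (E : ι → ℝ) : ℝ :=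
  ∑ i, Real.exp (-(β * E i))

/-- The Gibbs distribution `τ i = exp (-β E i) / Z`. -/
noncomputable def gibbs {ι : Type*} [Fintype ι] (β : ℝ) (E : ι → ℝ) : ι → ℝ :=
  fun i => Real.exp (-(β * E i)) / partZ β E

/-- The product distribution `(p ⊗ p') (i, j) = p i * p' j`. -/
def prodDist {ι κ : Type*} (p : ι → ℝ) (p' : κ → ℝ) : ι × κ → ℝ :=
  fun x => p x.1 * p' x.2

/-- The point distribution on `Fin 2` concentrated at `w`. -/
def pointDist (w : Fin 2) : Fin 2 → ℝ := fun x => if x = w then 1 else 0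

/-- The energies of system plus work qubit: `(i, w) ↦ E i + W * w`. -/
def workEnergy {n : ℕ} (E : Fin n → ℝ) (W : ℝ) : Fin n × Fin 2 → ℝ :=
  fun x => E x.1 + W * ((x.2 : ℕ) : ℝ)

/-- The max-relative entropy `D_max(p‖q) = ln (max_{i : p i > 0} p i / q i)`. -/
noncomputable def Dmax {ι : Type*} [Fintype ι] (p q : ι → ℝ) : ℝ :=
  Real.log (sSup {r : ℝ | ∃ i, 0 < p i ∧ r = p i / q i})

lemma partZ_pos {ι : Type*} [Fintype ι] [Nonempty ι] (β : ℝ) (E : ι → ℝ) : 0 < partZ β E :=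
  Finset.sum_pos (fun _ _ => Real.exp_pos _) Finset.univ_nonempty

lemma gibbs_pos {ι : Type*} [Fintype ι] [Nonempty ι] (β : ℝ) (E : ι → ℝ) (i : ι) :
    0 < gibbs β E i :=
  div_pos (Real.exp_pos _) (partZ_pos β E)

lemma gibbs_sum {ι : Type*} [Fintype ι] [Nonempty ι] (β : ℝ) (E : ι → ℝ) :
    ∑ i, gibbs β E i = 1 := by
  unfold gibbs
  rw [← Finset.sum_div]
  exact div_self (ne_of_gt (partZ_pos β E))

/-- Forward auxiliary: a Gibbs-preserving stochastic map sending `τ ⊗ δ₁` to `p ⊗ δ₀`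
forces the pointwise bound `c * p i ≤ τ i` where `c = exp (-βW)`. -/
lemma wof_forward {n : ℕ} (β W c : ℝ) (E p : Fin n → ℝ)
    (hcpos : (0:ℝ) < c)
    (hτpos : ∀ i, 0 < gibbs β E i)
    (htot : ∀ x : Fin n × Fin 2, gibbs β (workEnergy E W) x
      = gibbs β E x.1 * (if x.2 = 0 then 1 / (1 + c) else c / (1 + c)))
    (G : Matrix (Fin n × Fin 2) (Fin n × Fin 2) ℝ)
    (hGnn : ∀ i j, 0 ≤ G i j)
    (hfix : G.mulVec (gibbs β (workEnergy E W)) = gibbs β (workEnergy E W))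
    (hmap : G.mulVec (prodDist (gibbs β E) (pointDist 1)) = prodDist p (pointDist 0)) :
    ∀ i, c * p i ≤ gibbs β E i := by
  intro i
  have hq : ∀ y : Fin n × Fin 2, prodDist (gibbs β E) (pointDist 1) y
      ≤ ((1 + c) / c) * gibbs β (workEnergy E W) y := by
    rintro ⟨j, w⟩
    rw [htot]
    fin_cases w
    · simp only [prodDist, pointDist]
      norm_num
      have := hτpos j
      positivity
    · simp only [prodDist, pointDist]
      norm_num
      rw [show (1 + c) / c * (gibbs β E j * (c / (1 + c)))
          = gibbs β E j * ((1 + c) / c * (c / (1 + c))) by ring,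
        show (1 + c) / c * (c / (1 + c)) = 1 by field_simp]
      simp
  have h1 : prodDist p (pointDist 0) (i, 0)
      ≤ ((1 + c) / c) * gibbs β (workEnergy E W) (i, 0) := by
    rw [← hmap]
    have hfx := congrFun hfix (i, (0:Fin 2))
    simp only [Matrix.mulVec, dotProduct] at hfx ⊢
    calc ∑ y, G (i, (0:Fin 2)) y * prodDist (gibbs β E) (pointDist 1) y
        ≤ ∑ y, G (i, (0:Fin 2)) y * (((1 + c) / c) * gibbs β (workEnergy E W) y) :=
          Finset.sum_le_sum fun y _ => mul_le_mul_of_nonneg_left (hq y) (hGnn _ y)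
      _ = ((1 + c) / c) * ∑ y, G (i, (0:Fin 2)) y * gibbs β (workEnergy E W) y := by
          rw [Finset.mul_sum]; exact Finset.sum_congr rfl fun y _ => by ring
      _ = ((1 + c) / c) * gibbs β (workEnergy E W) (i, (0:Fin 2)) := by rw [hfx]
  rw [htot] at h1
  simp only [prodDist, pointDist] at h1
  norm_num at h1
  have h2 : (1 + c) / c * (gibbs β E i * (1 + c)⁻¹) = gibbs β E i / c := by
    field_simp
  rw [h2] at h1
  rw [show gibbs β E i / c = gibbs β E i * (1 / c) by ring] at h1
  have h3 := mul_le_mul_of_nonneg_left h1 hcpos.le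
  rwa [show c * (gibbs β E i * (1 / c)) = gibbs β E i by field_simp] at h3

/-- Backward auxiliary: from the pointwise bound `c * p i ≤ τ i` one constructs the
desired Gibbs-preserving stochastic map. -/
lemma wof_backward {n : ℕ} [Nonempty (Fin n)] (β W c : ℝ) (E p : Fin n → ℝ)
    (hp0 : ∀ i, 0 ≤ p i) (hp1 : ∑ i, p i = 1)
    (hcpos : (0:ℝ) < c) (h1c : (0:ℝ) < 1 + c)
    (hτpos : ∀ i, 0 < gibbs β E i) (hτsum : ∑ i, gibbs β E i = 1)
    (hτtsum : ∑ x, gibbs β (workEnergy E W) x = 1)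
    (htot : ∀ x : Fin n × Fin 2, gibbs β (workEnergy E W) x
      = gibbs β E x.1 * (if x.2 = 0 then 1 / (1 + c) else c / (1 + c)))
    (hcp : ∀ i, c * p i ≤ gibbs β E i) :
    (∃ G : Matrix (Fin n × Fin 2) (Fin n × Fin 2) ℝ, IsStochastic G ∧
        G.mulVec (gibbs β (workEnergy E W)) = gibbs β (workEnergy E W) ∧
        G.mulVec (prodDist (gibbs β E) (pointDist 1)) = prodDist p (pointDist 0)) := by
  have hεlt : c / (1 + c) < 1 := (div_lt_one h1c).2 (by linarith)
  have hεpos : 0 < c / (1 + c) := div_pos hcpos h1c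
  have h1ε : 1 - c / (1 + c) = 1 / (1 + c) := by field_simp; ring
  have h1εpos : 0 < 1 - c / (1 + c) := by linarith
  set p' : Fin n × Fin 2 → ℝ := prodDist p (pointDist 0) with hp'def
  set s : Fin n × Fin 2 → ℝ :=
    fun x => (gibbs β (workEnergy E W) x - (c / (1 + c)) * p' x) / (1 - c / (1 + c)) with hsdef
  have hsub : ∀ x, (c / (1 + c)) * p' x ≤ gibbs β (workEnergy E W) x := by
    rintro ⟨i, w⟩
    rw [htot]
    fin_cases w
    · simp only [hp'def, prodDist, pointDist]
      norm_num
      rw [show c / (1 + c) * p i = (c * p i) / (1 + c) by ring,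
          show gibbs β E i * (1 + c)⁻¹ = gibbs β E i / (1 + c) by ring]
      gcongr
      exact hcp i
    · simp only [hp'def, prodDist, pointDist]
      norm_num
      exact le_of_lt (mul_pos (hτpos i) (div_pos hcpos h1c))
  have hsnn : ∀ x, 0 ≤ s x := fun x =>
    div_nonneg (sub_nonneg.2 (hsub x)) (le_of_lt h1εpos)
  have hp'sum : ∑ x, p' x = 1 := by
    rw [hp'def]
    unfold prodDist pointDist
    rw [Fintype.sum_prod_type]
    simp [Fin.sum_univ_two, hp1]
  have hssum : ∑ x, s x = 1 := by
    rw [hsdef]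
    simp only
    rw [← Finset.sum_div, Finset.sum_sub_distrib, ← Finset.mul_sum, hτtsum, hp'sum]
    field_simp
  have hsum0 : ∑ j, gibbs β (workEnergy E W) (j, (0:Fin 2)) = 1 / (1 + c) := by
    have : ∀ j, gibbs β (workEnergy E W) (j, (0:Fin 2)) = gibbs β E j * (1 / (1 + c)) :=
      fun j => by rw [htot]; norm_num
    rw [Finset.sum_congr rfl fun j _ => this j, ← Finset.sum_mul, hτsum, one_mul]
  have hsum1 : ∑ j, gibbs β (workEnergy E W) (j, (1:Fin 2)) = c / (1 + c) := by
    have : ∀ j, gibbs β (workEnergy E W) (j, (1:Fin 2)) = gibbs β E j * (c / (1 + c)) :=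
      fun j => by rw [htot]; norm_num
    rw [Finset.sum_congr rfl fun j _ => this j, ← Finset.sum_mul, hτsum, one_mul]
  refine ⟨Matrix.of (fun x y => if y.2 = 1 then p' x else s x), ⟨?_, ?_⟩, ?_, ?_⟩
  · intro x y
    dsimp only [Matrix.of_apply]
    split
    · exact mul_nonneg (hp0 x.1) (by unfold pointDist; split <;> norm_num)
    · exact hsnn x
  · intro y
    dsimp only [Matrix.of_apply]
    by_cases h : y.2 = 1 <;> simp [h, hp'sum, hssum]
  · funext x
    simp only [Matrix.mulVec, dotProduct, Matrix.of_apply]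
    rw [Fintype.sum_prod_type]
    simp only [Fin.sum_univ_two]
    norm_num
    rw [Finset.sum_add_distrib, ← Finset.mul_sum, ← Finset.mul_sum, hsum0, hsum1, hsdef]
    simp only
    field_simp
    ring
  · funext x
    simp only [Matrix.mulVec, dotProduct, Matrix.of_apply]
    rw [Fintype.sum_prod_type]
    simp only [Fin.sum_univ_two]
    simp only [prodDist, pointDist]
    norm_num
    rw [← Finset.mul_sum, hτsum]
    simp [hp'def, prodDist, pointDist]

/-- **work of formation.** On the combined system `Fin n × Fin 2` with
energies `(i, w) ↦ E i + W * w` and its Gibbs distribution `τ_tot`, there is a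
Gibbs-preserving stochastic matrix mapping `τ ⊗ δ₁` to `p ⊗ δ₀` iff
`β * W ≥ D_max(p‖τ)`. -/
theorem work_of_formation_iff {n : ℕ} (β : ℝ) (hβ : 0 < β) (E : Fin n → ℝ)
    (p : Fin n → ℝ) (hp : IsProbDist p) (W : ℝ) :
    (∃ G : Matrix (Fin n × Fin 2) (Fin n × Fin 2) ℝ, IsStochastic G ∧
        G.mulVec (gibbs β (workEnergy E W)) = gibbs β (workEnergy E W) ∧
        G.mulVec (prodDist (gibbs β E) (pointDist 1)) = prodDist p (pointDist 0)) ↔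
      Dmax p (gibbs β E) ≤ β * W := by
  obtain ⟨hp0, hp1⟩ := hp
  haveI hn : Nonempty (Fin n) := by
    rcases Nat.eq_zero_or_pos n with h | h
    · exfalso; subst h; simp at hp1
    · exact ⟨⟨0, h⟩⟩
  have hcpos : (0:ℝ) < Real.exp (-(β * W)) := Real.exp_pos _
  have h1c : (0:ℝ) < 1 + Real.exp (-(β * W)) := by linarith
  have hZ : 0 < partZ β E := partZ_pos β E
  have hτpos : ∀ i, 0 < gibbs β E i := gibbs_pos β E
  have hτsum : ∑ i, gibbs β E i = 1 := gibbs_sum β E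
  have hce : Real.exp (-(β * W)) * Real.exp (β * W) = 1 := by
    rw [← Real.exp_add]; simp
  -- total partition function
  have hZtot : partZ β (workEnergy E W) = partZ β E * (1 + Real.exp (-(β * W))) := by
    unfold partZ workEnergy
    rw [Fintype.sum_prod_type, Finset.sum_mul]
    refine Finset.sum_congr rfl fun i _ => ?_
    rw [Fin.sum_univ_two]
    simp only [Fin.val_zero, Fin.val_one, Nat.cast_zero, Nat.cast_one]
    rw [show -(β * (E i + W * 0)) = -(β * E i) by ring,
        show -(β * (E i + W * 1)) = -(β * E i) + -(β * W) by ring, Real.exp_add]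
    ring
  -- factorization of the total Gibbs state
  have htot : ∀ x : Fin n × Fin 2, gibbs β (workEnergy E W) x
      = gibbs β E x.1 * (if x.2 = 0 then 1 / (1 + Real.exp (-(β * W)))
          else Real.exp (-(β * W)) / (1 + Real.exp (-(β * W)))) := by
    rintro ⟨i, w⟩
    fin_cases w
    · simp only [gibbs, workEnergy, hZtot]
      norm_num
      field_simp
    · simp only [gibbs, workEnergy, hZtot]
      norm_num
      rw [show -(β * (E i + W)) = -(β * E i) + -(β * W) by ring, Real.exp_add]
      field_simp
  -- the pointwise criterion is equivalent to the Dmax condition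
  have hkey : (∀ i, p i ≤ Real.exp (β * W) * gibbs β E i) ↔ Dmax p (gibbs β E) ≤ β * W := by
    have hex : ∃ i, 0 < p i := by
      by_contra h
      push_neg at h
      have h2 : ∑ i, p i = 0 := Finset.sum_eq_zero fun i _ => le_antisymm (h i) (hp0 i)
      rw [hp1] at h2; norm_num at h2
    obtain ⟨i₀, hi₀⟩ := hex
    set S := {r : ℝ | ∃ i, 0 < p i ∧ r = p i / gibbs β E i} with hS
    have hSfin : S.Finite := Set.Finite.subset (Set.finite_range fun i => p i / gibbs β E i)
      (by rintro r ⟨i, _, rfl⟩; exact ⟨i, rfl⟩)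
    have hbdd : BddAbove S := hSfin.bddAbove
    have hmem : p i₀ / gibbs β E i₀ ∈ S := ⟨i₀, hi₀, rfl⟩
    have hSpos : 0 < sSup S := lt_of_lt_of_le (div_pos hi₀ (hτpos i₀)) (le_csSup hbdd hmem)
    constructor
    · intro h
      have hle : sSup S ≤ Real.exp (β * W) := by
        apply csSup_le ⟨_, hmem⟩
        rintro r ⟨i, hpi, rfl⟩
        rw [div_le_iff₀ (hτpos i)]
        linarith [h i, mul_comm (Real.exp (β * W)) (gibbs β E i)]
      calc Dmax p (gibbs β E) = Real.log (sSup S) := rfl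
        _ ≤ Real.log (Real.exp (β * W)) := Real.log_le_log hSpos hle
        _ = β * W := Real.log_exp _
    · intro h i
      rcases eq_or_lt_of_le (hp0 i) with h0 | h0
      · rw [← h0]
        exact le_of_lt (mul_pos (Real.exp_pos _) (hτpos i))
      · have h1 : p i / gibbs β E i ≤ sSup S := le_csSup hbdd ⟨i, h0, rfl⟩
        have h2 : sSup S ≤ Real.exp (β * W) := by
          rw [← Real.exp_log hSpos]
          exact Real.exp_le_exp.2 h
        rw [← div_le_iff₀ (hτpos i)]
        exact h1.trans h2
  rw [← hkey]
  constructor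
  · rintro ⟨G, ⟨hGnn, _⟩, hfix, hmap⟩ i
    have hcp := wof_forward β W (Real.exp (-(β * W))) E p hcpos hτpos htot G hGnn hfix hmap i
    have h3 := mul_le_mul_of_nonneg_left hcp (Real.exp_pos (β * W)).le
    calc p i = Real.exp (β * W) * (Real.exp (-(β * W)) * p i) := by
          rw [show Real.exp (β * W) * (Real.exp (-(β * W)) * p i)
              = (Real.exp (-(β * W)) * Real.exp (β * W)) * p i by ring, hce, one_mul]
      _ ≤ Real.exp (β * W) * gibbs β E i := h3
  · intro hpt
    have hcp : ∀ i, Real.exp (-(β * W)) * p i ≤ gibbs β E i := by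
      intro i
      have h2 := mul_le_mul_of_nonneg_left (hpt i) hcpos.le
      calc Real.exp (-(β * W)) * p i
          ≤ Real.exp (-(β * W)) * (Real.exp (β * W) * gibbs β E i) := h2
        _ = (Real.exp (-(β * W)) * Real.exp (β * W)) * gibbs β E i := by ring
        _ = gibbs β E i := by rw [hce, one_mul]
    exact wof_backward β W (Real.exp (-(β * W))) E p hp0 hp1 hcpos h1c hτpos hτsum
      (gibbs_sum β (workEnergy E W)) htot hcp
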